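/- Let P be a probability measure on X, s : X × Y → ℝ a measurable score, and w₁, w₂ : X → [0,∞) measurable with 0 < E_P[w₁(X)] and 0 < E_P[w₂(X)]. Define F_P(t, w) = E_P[w(X)·1{s(X,Y) ≤ t}] / E_P[w(X)]. Then sup over t ∈ ℝ of |F_P(t, w₁) - F_P(t, w₂)| ≤ E_P[|w₁(X) - w₂(X)|] / max(E_P[w₁(X)], E_P[w₂(X)]). -/

import Mathlib

open MeasureTheory

lemma key_ineq (a b A B D : ℝ) (ha : 0 < a) (hb : 0 < b)
    (hA0 : 0 ≤ A) (hAa : A ≤ a) (hB0 : 0 ≤ B) (hBb : B ≤ b)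
    (h1 : |A - B| ≤ D) (h2 : |(a - A) - (b - B)| ≤ D) :
    |A / a - B / b| ≤ D / max a b := by
  wlog hab : b ≤ a generalizing a b A B
  · have := this b a B A hb ha hB0 hBb hA0 hAa (by rwa [abs_sub_comm]) (by rwa [abs_sub_comm])
      (le_of_not_ge hab)
    rwa [abs_sub_comm, max_comm] at this
  rw [max_eq_left hab]
  have hθ0 : 0 ≤ B / b := div_nonneg hB0 hb.le
  have hθ1 : B / b ≤ 1 := (div_le_one hb).2 hBb
  have heq : A / a - B / b = ((1 - B/b) * (A - B) - (B/b) * ((a - A) - (b - B))) / a := by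
    field_simp
    ring
  rw [heq, abs_div, abs_of_pos ha]
  have hnum : |(1 - B/b) * (A - B) - (B/b) * ((a - A) - (b - B))| ≤ D := by
    calc |(1 - B/b) * (A - B) - (B/b) * ((a - A) - (b - B))|
        ≤ |(1 - B/b) * (A - B)| + |(B/b) * ((a - A) - (b - B))| := abs_sub _ _
      _ = (1 - B/b) * |A - B| + (B/b) * |(a - A) - (b - B)| := by
          rw [abs_mul, abs_mul, abs_of_nonneg (by linarith), abs_of_nonneg hθ0]
      _ ≤ (1 - B/b) * D + (B/b) * D := by
          apply add_le_add
          · exact mul_le_mul_of_nonneg_left h1 (by linarith)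
          · exact mul_le_mul_of_nonneg_left h2 hθ0
      _ = D := by ring
  gcongr

theorem weighted_cdf_perturbation {X Y : Type*} [MeasurableSpace X] [MeasurableSpace Y]
    (P : Measure (X × Y)) [IsProbabilityMeasure P]
    (s : X × Y → ℝ) (hs : Measurable s)
    (w₁ w₂ : X → ℝ) (hw₁_meas : Measurable w₁) (hw₂_meas : Measurable w₂)
    (hw₁_nonneg : ∀ x, 0 ≤ w₁ x) (hw₂_nonneg : ∀ x, 0 ≤ w₂ x)
    (hw₁_int : Integrable (fun z => w₁ z.1) P) (hw₂_int : Integrable (fun z => w₂ z.1) P)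
    (hw₁_pos : 0 < ∫ z, w₁ z.1 ∂P) (hw₂_pos : 0 < ∫ z, w₂ z.1 ∂P)
    (F : ℝ → (X → ℝ) → ℝ)
    (hF : F = fun t w =>
      (∫ z, w z.1 * Set.indicator {z' : X × Y | s z' ≤ t} (fun _ => (1 : ℝ)) z ∂P) /
        ∫ z, w z.1 ∂P) :
    ∀ t : ℝ, |F t w₁ - F t w₂| ≤
      (∫ z, |w₁ z.1 - w₂ z.1| ∂P) / max (∫ z, w₁ z.1 ∂P) (∫ z, w₂ z.1 ∂P) := by
  intro t
  subst hF
  set f : X × Y → ℝ := Set.indicator {z' : X × Y | s z' ≤ t} (fun _ => (1 : ℝ)) with hf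
  have hset : MeasurableSet {z' : X × Y | s z' ≤ t} := measurableSet_le hs measurable_const
  have hf0 : ∀ z, 0 ≤ f z := fun z => Set.indicator_nonneg (fun _ _ => zero_le_one) z
  have hf1 : ∀ z, f z ≤ 1 := fun z => Set.indicator_le_self' (fun _ _ => zero_le_one) z |>.trans (by
    by_cases h : z ∈ {z' : X × Y | s z' ≤ t} <;> simp [hf, h])
  have hfmeas : Measurable f := (measurable_const.indicator hset)
  have hint1 : Integrable (fun z => w₁ z.1 * f z) P := by
    refine hw₁_int.mono' ((hw₁_meas.comp measurable_fst).mul hfmeas).aestronglyMeasurable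
      (Filter.Eventually.of_forall fun z => ?_)
    rw [Real.norm_eq_abs, abs_mul]
    nlinarith [abs_nonneg (w₁ z.1), hf0 z, hf1 z, abs_of_nonneg (hf0 z), abs_of_nonneg (hw₁_nonneg z.1)]
  have hint2 : Integrable (fun z => w₂ z.1 * f z) P := by
    refine hw₂_int.mono' ((hw₂_meas.comp measurable_fst).mul hfmeas).aestronglyMeasurable
      (Filter.Eventually.of_forall fun z => ?_)
    rw [Real.norm_eq_abs, abs_mul]
    nlinarith [abs_nonneg (w₂ z.1), hf0 z, hf1 z, abs_of_nonneg (hf0 z), abs_of_nonneg (hw₂_nonneg z.1)]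
  set a := ∫ z, w₁ z.1 ∂P
  set b := ∫ z, w₂ z.1 ∂P
  set A := ∫ z, w₁ z.1 * f z ∂P
  set B := ∫ z, w₂ z.1 * f z ∂P
  set D := ∫ z, |w₁ z.1 - w₂ z.1| ∂P with hD
  have hDint : Integrable (fun z => |w₁ z.1 - w₂ z.1|) P := (hw₁_int.sub hw₂_int).abs
  have hbound : ∀ (g : X × Y → ℝ), (∀ z, 0 ≤ g z) → (∀ z, g z ≤ 1) →
      Integrable (fun z => w₁ z.1 * g z) P → Integrable (fun z => w₂ z.1 * g z) P →
      |(∫ z, w₁ z.1 * g z ∂P) - ∫ z, w₂ z.1 * g z ∂P| ≤ D := by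
    intro g hg0 hg1 hi1 hi2
    rw [← integral_sub hi1 hi2]
    calc |∫ z, (w₁ z.1 * g z - w₂ z.1 * g z) ∂P|
        ≤ ∫ z, |w₁ z.1 * g z - w₂ z.1 * g z| ∂P := by
          simpa using norm_integral_le_integral_norm (f := fun z => w₁ z.1 * g z - w₂ z.1 * g z) (μ := P)
      _ ≤ D := by
          refine integral_mono (hi1.sub hi2).abs hDint fun z => ?_
          have : w₁ z.1 * g z - w₂ z.1 * g z = (w₁ z.1 - w₂ z.1) * g z := by ring
          rw [this, abs_mul, abs_of_nonneg (hg0 z)]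
          nlinarith [abs_nonneg (w₁ z.1 - w₂ z.1), hg1 z]
  have h1 : |A - B| ≤ D := hbound f hf0 hf1 hint1 hint2
  have h2 : |(a - A) - (b - B)| ≤ D := by
    have e1 : a - A = ∫ z, w₁ z.1 * (1 - f z) ∂P := by
      rw [← integral_sub hw₁_int hint1]; congr 1; funext z; ring
    have e2 : b - B = ∫ z, w₂ z.1 * (1 - f z) ∂P := by
      rw [← integral_sub hw₂_int hint2]; congr 1; funext z; ring
    rw [e1, e2]
    exact hbound (fun z => 1 - f z) (fun z => by linarith [hf1 z]) (fun z => by linarith [hf0 z])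
      ((hw₁_int.sub hint1).congr (Filter.Eventually.of_forall fun z => by simp only [Pi.sub_apply]; ring))
      ((hw₂_int.sub hint2).congr (Filter.Eventually.of_forall fun z => by simp only [Pi.sub_apply]; ring))
  have hA0 : 0 ≤ A := integral_nonneg fun z => mul_nonneg (hw₁_nonneg _) (hf0 z)
  have hAa : A ≤ a := integral_mono hint1 hw₁_int fun z =>
    by nlinarith [hw₁_nonneg z.1, hf1 z, hf0 z]
  have hB0 : 0 ≤ B := integral_nonneg fun z => mul_nonneg (hw₂_nonneg _) (hf0 z)
  have hBb : B ≤ b := integral_mono hint2 hw₂_int fun z =>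
    by nlinarith [hw₂_nonneg z.1, hf1 z, hf0 z]
  exact key_ineq a b A B D hw₁_pos hw₂_pos hA0 hAa hB0 hBb h1 h2
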